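/- Let α > 0, β > 0, λ ∈ ℂ and let s be a real number with s > |λ|^{1/α}. Then the improper integral ∫₀^∞ e^{−st} t^{β−1} E_{α,β}(λ t^α) dt converges and equals s^{α−β} / (s^α − λ). -/

import Mathlib

open MeasureTheory

/-- The two-parameter Mittag-Leffler function `E_{α,β}(z) = ∑_{k=0}^∞ z^k / Γ(αk + β)`. -/
noncomputable def mittagLeffler (α β : ℝ) (z : ℂ) : ℂ :=
  ∑' k : ℕ, z ^ k / Complex.Gamma (α * k + β)

open Set Filter
open scoped ENNReal NNReal

noncomputable def mlAux (α β : ℝ) (lam : ℂ) (s : ℝ) (k : ℕ) (t : ℝ) : ℂ :=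
  (lam ^ k / (Real.Gamma (α * k + β) : ℂ)) *
    ((t ^ (α * k + β - 1) * Real.exp (-(s * t)) : ℝ) : ℂ)

lemma mlAux_integrableOn {α β : ℝ} (hα : 0 < α) (hβ : 0 < β) (lam : ℂ) {s : ℝ} (hs : 0 < s)
    (k : ℕ) : IntegrableOn (mlAux α β lam s k) (Ioi 0) := by
  have hk : (0:ℝ) ≤ α * k := by positivity
  have h1 : IntegrableOn (fun t : ℝ => t ^ (α * k + β - 1) * Real.exp (-s * t ^ (1:ℝ)))
      (Ioi 0) := integrableOn_rpow_mul_exp_neg_mul_rpow (by linarith) zero_lt_one hs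
  have h2 : IntegrableOn (fun t : ℝ => t ^ (α * k + β - 1) * Real.exp (-(s * t)))
      (Ioi 0) := by
    refine h1.congr_fun (fun t ht => ?_) measurableSet_Ioi
    simp only [Real.rpow_one]; ring_nf
  exact ((h2.ofReal).const_mul _)

lemma mlAux_integral_norm {α β : ℝ} (hα : 0 < α) (hβ : 0 < β) (lam : ℂ) {s : ℝ} (hs : 0 < s)
    (k : ℕ) :
    ∫ t in Ioi (0:ℝ), ‖mlAux α β lam s k t‖ = ‖lam‖ ^ k * (1 / s) ^ (α * k + β) := by
  have hab : (0:ℝ) < α * k + β := by positivity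
  have hΓ : 0 < Real.Gamma (α * k + β) := Real.Gamma_pos_of_pos hab
  have key : ∀ t ∈ Ioi (0:ℝ), ‖mlAux α β lam s k t‖ =
      (‖lam‖ ^ k / Real.Gamma (α * k + β)) * (t ^ (α * k + β - 1) * Real.exp (-(s * t))) := by
    intro t ht
    have ht' : (0:ℝ) < t := ht
    rw [mlAux, norm_mul, norm_div, norm_pow, Complex.norm_real, Complex.norm_real,
      Real.norm_of_nonneg hΓ.le, Real.norm_of_nonneg (by positivity)]
  rw [setIntegral_congr_fun measurableSet_Ioi key, integral_const_mul,
    Real.integral_rpow_mul_exp_neg_mul_Ioi hab hs]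
  field_simp

lemma mlAux_integral {α β : ℝ} (hα : 0 < α) (hβ : 0 < β) (lam : ℂ) {s : ℝ} (hs : 0 < s)
    (k : ℕ) :
    ∫ t in Ioi (0:ℝ), mlAux α β lam s k t = lam ^ k * (((1 / s) ^ (α * k + β) : ℝ) : ℂ) := by
  have hab : (0:ℝ) < α * k + β := by positivity
  have hΓ : 0 < Real.Gamma (α * k + β) := Real.Gamma_pos_of_pos hab
  rw [show mlAux α β lam s k = fun t =>
      (lam ^ k / (Real.Gamma (α * k + β) : ℂ)) •
        ((t ^ (α * k + β - 1) * Real.exp (-(s * t)) : ℝ) : ℂ) from rfl]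
  rw [integral_smul, smul_eq_mul,
    show (∫ t in Ioi (0:ℝ), ((t ^ (α * k + β - 1) * Real.exp (-(s * t)) : ℝ) : ℂ)) =
      ((∫ t in Ioi (0:ℝ), t ^ (α * k + β - 1) * Real.exp (-(s * t)) : ℝ) : ℂ) from
      integral_ofReal,
    Real.integral_rpow_mul_exp_neg_mul_Ioi hab hs]
  push_cast
  have hΓ' : (Real.Gamma (α * k + β) : ℂ) ≠ 0 := by exact_mod_cast hΓ.ne'
  field_simp

lemma mlAux_tsum_eq {α β : ℝ} (lam : ℂ) (s : ℝ) {t : ℝ} (ht : 0 < t) :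
    ((Real.exp (-(s * t)) : ℝ) : ℂ) * ((t ^ (β - 1) : ℝ) : ℂ) *
      mittagLeffler α β (lam * ((t ^ α : ℝ) : ℂ)) = ∑' k, mlAux α β lam s k t := by
  rw [mittagLeffler, ← tsum_mul_left]
  congr 1; funext k
  have h1 : Complex.Gamma ((α : ℂ) * (k : ℕ) + (β : ℂ)) = ((Real.Gamma (α * k + β) : ℝ) : ℂ) := by
    rw [← Complex.Gamma_ofReal]; norm_cast
  have h2 : t ^ (α * k + β - 1) = t ^ (β - 1) * (t ^ α) ^ k := by
    rw [← Real.rpow_natCast (t ^ α) k, ← Real.rpow_mul ht.le, ← Real.rpow_add ht]; ring_nf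
  rw [h1, mlAux, h2]
  push_cast
  ring

/-- Laplace transform of `t^{β−1} E_{α,β}(λ t^α)`: for `α, β > 0`, `λ ∈ ℂ` and real
`s > |λ|^{1/α}`, the integral `∫₀^∞ e^{−st} t^{β−1} E_{α,β}(λ t^α) dt` converges and
equals `s^{α−β}/(s^α − λ)`. -/
theorem laplace_mittagLeffler (α β : ℝ) (hα : 0 < α) (hβ : 0 < β) (lam : ℂ)
    (s : ℝ) (hs : ‖lam‖ ^ (1 / α) < s) :
    IntegrableOn
      (fun t : ℝ =>
        ((Real.exp (-(s * t)) : ℝ) : ℂ) * ((t ^ (β - 1) : ℝ) : ℂ) *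
          mittagLeffler α β (lam * ((t ^ α : ℝ) : ℂ)))
      (Set.Ioi 0) volume ∧
    (∫ t in Set.Ioi (0 : ℝ),
        ((Real.exp (-(s * t)) : ℝ) : ℂ) * ((t ^ (β - 1) : ℝ) : ℂ) *
          mittagLeffler α β (lam * ((t ^ α : ℝ) : ℂ))) =
      (s : ℂ) ^ ((α - β : ℝ) : ℂ) / ((s : ℂ) ^ ((α : ℝ) : ℂ) - lam) := by
  have hs0 : 0 < s := lt_of_le_of_lt (Real.rpow_nonneg (norm_nonneg lam) _) hs
  have hsα : (0:ℝ) < s ^ α := Real.rpow_pos_of_pos hs0 α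
  have hlam : ‖lam‖ < s ^ α := by
    have h := Real.rpow_lt_rpow (Real.rpow_nonneg (norm_nonneg lam) _) hs hα
    rwa [← Real.rpow_mul (norm_nonneg lam), one_div, inv_mul_cancel₀ hα.ne', Real.rpow_one] at h
  set μ := volume.restrict (Set.Ioi (0:ℝ)) with hμ
  have hF_int : ∀ k, Integrable (mlAux α β lam s k) μ :=
    fun k => mlAux_integrableOn hα hβ lam hs0 k
  -- summability of the integrals of norms
  have hterm : ∀ k : ℕ, ‖lam‖ ^ k * (1 / s) ^ (α * k + β)
      = (1 / s) ^ β * (‖lam‖ * (1 / s) ^ α) ^ k := by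
    intro k
    rw [Real.rpow_add (by positivity), mul_pow,
      ← Real.rpow_natCast ((1/s) ^ α) k, ← Real.rpow_mul (by positivity)]
    ring
  have hr1 : ‖lam‖ * (1 / s) ^ α < 1 := by
    rw [one_div, ← Real.rpow_neg_one s, ← Real.rpow_mul hs0.le, mul_comm (-1:ℝ) α,
      Real.rpow_mul hs0.le, Real.rpow_neg_one, ← div_eq_mul_inv]
    exact (div_lt_one hsα).mpr hlam
  have hr0 : 0 ≤ ‖lam‖ * (1 / s) ^ α := by positivity
  have hsum_int : Summable fun k => ∫ t, ‖mlAux α β lam s k t‖ ∂μ := by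
    have : (fun k => ∫ t, ‖mlAux α β lam s k t‖ ∂μ)
        = fun k => (1 / s) ^ β * (‖lam‖ * (1 / s) ^ α) ^ k := by
      funext k
      rw [hμ, ← hterm k, ← mlAux_integral_norm hα hβ lam hs0 k]
    rw [this]
    exact (summable_geometric_of_lt_one hr0 hr1).mul_left _
  -- finiteness of the lintegral sum and a.e. summability
  have hfin : ∑' k, ∫⁻ t, ‖mlAux α β lam s k t‖₊ ∂μ ≠ ⊤ := by
    have h1 : ∀ k, ∫⁻ t, ‖mlAux α β lam s k t‖₊ ∂μ
        = ENNReal.ofReal (∫ t, ‖mlAux α β lam s k t‖ ∂μ) :=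
      fun k => (ofReal_integral_norm_eq_lintegral_enorm (hF_int k)).symm
    simp_rw [h1]
    rw [← ENNReal.ofReal_tsum_of_nonneg
      (fun k => integral_nonneg fun t => norm_nonneg _) hsum_int]
    exact ENNReal.ofReal_ne_top
  have hae : ∀ᵐ t ∂μ, Summable fun k => ‖mlAux α β lam s k t‖ := by
    rw [← lintegral_tsum (f := fun k t => (‖mlAux α β lam s k t‖₊ : ℝ≥0∞)) (fun k => (hF_int k).1.enorm)] at hfin
    refine (ae_lt_top' (AEMeasurable.ennreal_tsum
      (fun k => (hF_int k).1.enorm)) hfin).mono fun t ht => ?_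
    have := ENNReal.tsum_coe_ne_top_iff_summable_coe.mp ht.ne
    simpa [coe_nnnorm] using this
  -- integrability of the sum
  have hg_int : Integrable (fun t => ∑' k, mlAux α β lam s k t) μ := by
    refine ⟨?_, ?_⟩
    · refine aestronglyMeasurable_of_tendsto_ae atTop
        (f := fun n t => ∑ k ∈ Finset.range n, mlAux α β lam s k t)
        (fun n => Finset.aestronglyMeasurable_fun_sum _ fun k _ => (hF_int k).1) ?_
      exact hae.mono fun t ht => ht.of_norm.hasSum.tendsto_sum_nat
    · simp only [HasFiniteIntegral]
      calc ∫⁻ t, ‖∑' k, mlAux α β lam s k t‖₊ ∂μ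
          ≤ ∫⁻ t, ∑' k, (‖mlAux α β lam s k t‖₊ : ℝ≥0∞) ∂μ := by
            refine lintegral_mono_ae (hae.mono fun t ht => ?_)
            rw [← enorm_eq_nnnorm, ← ofReal_norm]
            calc ENNReal.ofReal ‖∑' k, mlAux α β lam s k t‖
                ≤ ENNReal.ofReal (∑' k, ‖mlAux α β lam s k t‖) :=
                  ENNReal.ofReal_le_ofReal (norm_tsum_le_tsum_norm ht)
              _ = ∑' k, ENNReal.ofReal ‖mlAux α β lam s k t‖ :=
                  ENNReal.ofReal_tsum_of_nonneg (fun k => norm_nonneg _) ht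
              _ = ∑' k, (‖mlAux α β lam s k t‖₊ : ℝ≥0∞) :=
                  tsum_congr fun k => ofReal_norm _
        _ = ∑' k, ∫⁻ t, ‖mlAux α β lam s k t‖₊ ∂μ :=
            lintegral_tsum (fun k => (hF_int k).1.enorm)
        _ < ⊤ := hfin.lt_top
  -- the value of the integral
  have hHasSum := MeasureTheory.hasSum_integral_of_summable_integral_norm hF_int hsum_int
  have hval : ∑' k, ∫ t, mlAux α β lam s k t ∂μ
      = ∫ t, (∑' k, mlAux α β lam s k t) ∂μ := hHasSum.tsum_eq
  -- geometric sum
  have hz : ‖lam * (((1 / s) ^ α : ℝ) : ℂ)‖ < 1 := by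
    rw [norm_mul, Complex.norm_real, Real.norm_of_nonneg (by positivity)]
    exact hr1
  have hsum_val : ∑' k, ∫ t, mlAux α β lam s k t ∂μ
      = (((1 / s) ^ β : ℝ) : ℂ) * (1 - lam * (((1 / s) ^ α : ℝ) : ℂ))⁻¹ := by
    have h1 : ∀ k : ℕ, (∫ t, mlAux α β lam s k t ∂μ)
        = (((1 / s) ^ β : ℝ) : ℂ) * (lam * (((1 / s) ^ α : ℝ) : ℂ)) ^ k := by
      intro k
      have hterm2 : ((1/s):ℝ) ^ (α * k + β) = (1/s) ^ β * ((1/s) ^ α) ^ k := by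
        rw [Real.rpow_add (by positivity), ← Real.rpow_natCast ((1/s) ^ α) k,
          ← Real.rpow_mul (by positivity)]
        ring
      rw [show (∫ t, mlAux α β lam s k t ∂μ) = ∫ t in Set.Ioi (0:ℝ), mlAux α β lam s k t from rfl,
        mlAux_integral hα hβ lam hs0 k, hterm2]
      push_cast
      rw [mul_pow]
      ring
    simp_rw [h1]
    rw [tsum_mul_left, tsum_geometric_of_norm_lt_one hz]
  have hA : ((s ^ α : ℝ) : ℂ) ≠ 0 := by exact_mod_cast hsα.ne'
  have hB : ((s ^ β : ℝ) : ℂ) ≠ 0 := by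
    exact_mod_cast (Real.rpow_pos_of_pos hs0 β).ne'
  have hAl : ((s ^ α : ℝ) : ℂ) - lam ≠ 0 := by
    rw [sub_ne_zero]
    intro h
    rw [← h, Complex.norm_real, Real.norm_of_nonneg hsα.le] at hlam
    exact lt_irrefl _ hlam
  have h1z : (1 : ℂ) - lam * (((1 / s) ^ α : ℝ) : ℂ) ≠ 0 := by
    rw [sub_ne_zero]
    intro h
    rw [← h, norm_one] at hz
    exact lt_irrefl _ hz
  have e1 : (((1 / s) ^ α : ℝ) : ℂ) = (((s ^ α : ℝ) : ℂ))⁻¹ := by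
    rw [one_div, ← Real.rpow_neg_one s, ← Real.rpow_mul hs0.le, mul_comm (-1:ℝ) α,
      Real.rpow_mul hs0.le, Real.rpow_neg_one]
    push_cast
    ring
  have e2 : (((1 / s) ^ β : ℝ) : ℂ) = (((s ^ β : ℝ) : ℂ))⁻¹ := by
    rw [one_div, ← Real.rpow_neg_one s, ← Real.rpow_mul hs0.le, mul_comm (-1:ℝ) β,
      Real.rpow_mul hs0.le, Real.rpow_neg_one]
    push_cast
    ring
  have e3 : ((s : ℂ)) ^ ((α - β : ℝ) : ℂ) = ((s ^ α : ℝ) : ℂ) * (((s ^ β : ℝ) : ℂ))⁻¹ := by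
    rw [← Complex.ofReal_cpow hs0.le (α - β), Real.rpow_sub hs0]
    push_cast
    ring
  have e4 : ((s : ℂ)) ^ ((α : ℝ) : ℂ) = ((s ^ α : ℝ) : ℂ) :=
    (Complex.ofReal_cpow hs0.le α).symm
  constructor
  · exact IntegrableOn.congr_fun hg_int (fun t ht => (mlAux_tsum_eq lam s ht).symm)
      measurableSet_Ioi
  · rw [setIntegral_congr_fun measurableSet_Ioi
      (fun t (ht : 0 < t) => mlAux_tsum_eq lam s ht), ← hval, hsum_val, e3, e4, e2]
    rw [e1] at h1z ⊢
    field_simp
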